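/- In Δ_s(n), an element covers exactly one element (is join-irreducible) if and only if it has the form (0,...,0, n-k, 0,...,0, k) with n-k in some position t ∈ {0,...,s-2} and k in the last position, for some k ∈ {0,...,n-1}. -/
import Mathlib


def psum {s : ℕ} (a : Fin s → ℕ) (j : Fin s) : ℕ :=
  ∑ i : Fin s, if i ≤ j then a i else 0

def Dom {s : ℕ} (a b : Fin s → ℕ) : Prop := ∀ j : Fin s, psum a j ≤ psum b j

def SDom {s : ℕ} (a b : Fin s → ℕ) : Prop := Dom a b ∧ a ≠ b

def CoversWC {s : ℕ} (n : ℕ) (a b : Fin s → ℕ) : Prop :=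
  SDom a b ∧ ∀ c : Fin s → ℕ, (∑ i, c i = n) → SDom a c → SDom c b → False

lemma psum_eq_sum_Iic {s : ℕ} (a : Fin s → ℕ) (j : Fin s) :
    psum a j = ∑ i ∈ Finset.Iic j, a i := by
  rw [psum, ← Finset.sum_filter]
  congr 1
  ext i
  simp

lemma psum_mono {s : ℕ} (a : Fin s → ℕ) {i j : Fin s} (h : i ≤ j) :
    psum a i ≤ psum a j := by
  rw [psum_eq_sum_Iic, psum_eq_sum_Iic]
  exact Finset.sum_le_sum_of_subset (Finset.Iic_subset_Iic.mpr h)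

lemma psum_last {s : ℕ} (a : Fin s → ℕ) (hs : 0 < s) :
    psum a ⟨s - 1, by omega⟩ = ∑ i, a i := by
  rw [psum_eq_sum_Iic]
  have : Finset.Iic (⟨s - 1, by omega⟩ : Fin s) = Finset.univ := by
    ext i
    simp [Fin.le_def]
    omega
  rw [this]

lemma psum_zero {s : ℕ} (a : Fin s → ℕ) (h : 0 < s) :
    psum a ⟨0, h⟩ = a ⟨0, h⟩ := by
  rw [psum_eq_sum_Iic]
  have : Finset.Iic (⟨0, h⟩ : Fin s) = {⟨0, h⟩} := by
    ext i
    simp only [Finset.mem_Iic, Finset.mem_singleton, Fin.le_def, Fin.ext_iff]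
    omega
  rw [this, Finset.sum_singleton]

lemma fin_mk_eq {s : ℕ} {i : Fin s} {m : ℕ} {h : m < s} (hv : i.val = m) :
    i = ⟨m, h⟩ := Fin.ext hv

lemma psum_succ {s : ℕ} (a : Fin s → ℕ) (m : ℕ) (hm : m < s) (h : m + 1 < s) :
    psum a ⟨m + 1, h⟩ = psum a ⟨m, hm⟩ + a ⟨m + 1, h⟩ := by
  rw [psum_eq_sum_Iic, psum_eq_sum_Iic]
  have hins : Finset.Iic (⟨m + 1, h⟩ : Fin s)
      = insert ⟨m + 1, h⟩ (Finset.Iic ⟨m, hm⟩) := by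
    ext i
    simp only [Finset.mem_Iic, Finset.mem_insert, Fin.le_def, Fin.ext_iff]
    omega
  rw [hins, Finset.sum_insert (by simp [Fin.le_def])]
  ring

lemma eq_of_psum_eq {s : ℕ} {a b : Fin s → ℕ} (h : ∀ j, psum a j = psum b j) : a = b := by
  have key : ∀ m, ∀ hm : m < s, a ⟨m, hm⟩ = b ⟨m, hm⟩ := by
    intro m
    induction m with
    | zero =>
        intro hm
        have h0 := h ⟨0, hm⟩
        rw [psum_zero a hm, psum_zero b hm] at h0
        exact h0
    | succ m ih =>
        intro hm
        have hm' : m < s := by omega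
        have ha := psum_succ a m hm' hm
        have hb := psum_succ b m hm' hm
        have h1 := h ⟨m + 1, hm⟩
        have h2 := h ⟨m, hm'⟩
        omega
  funext i
  exact key i.val i.isLt

/-- move one unit from position `j` to position `j+1` -/
def mv {s : ℕ} (a : Fin s → ℕ) (j : Fin s) : Fin s → ℕ :=
  fun i => if i = j then a j - 1 else if i.val = j.val + 1 then a i + 1 else a i

lemma psum_mv {s : ℕ} (a : Fin s → ℕ) (j : Fin s) (hj : j.val + 1 < s) (ha1 : 1 ≤ a j)
    (i : Fin s) :
    psum (mv a j) i + (if j ≤ i then 1 else 0)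
      = psum a i + (if j.val + 1 ≤ i.val then 1 else 0) := by
  have hne : j ≠ (⟨j.val + 1, hj⟩ : Fin s) := by simp [Fin.ext_iff]
  rw [psum_eq_sum_Iic, psum_eq_sum_Iic]
  have h1 : (if j ≤ i then (1 : ℕ) else 0)
      = ∑ k ∈ Finset.Iic i, if k = j then 1 else 0 := by
    rw [Finset.sum_ite_eq' (Finset.Iic i) j (fun _ => (1 : ℕ))]
    simp [Finset.mem_Iic]
  have h2 : (if j.val + 1 ≤ i.val then (1 : ℕ) else 0)
      = ∑ k ∈ Finset.Iic i, if k = (⟨j.val + 1, hj⟩ : Fin s) then 1 else 0 := by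
    rw [Finset.sum_ite_eq' (Finset.Iic i) (⟨j.val + 1, hj⟩ : Fin s) (fun _ => (1 : ℕ))]
    simp [Finset.mem_Iic, Fin.le_def]
  rw [h1, h2, ← Finset.sum_add_distrib, ← Finset.sum_add_distrib]
  apply Finset.sum_congr rfl
  intro k _
  simp only [mv]
  by_cases hk : k = j
  · subst hk
    rw [if_pos rfl, if_pos rfl, if_neg hne]
    omega
  · rw [if_neg hk]
    by_cases hk2 : k.val = j.val + 1
    · have hk2' : k = (⟨j.val + 1, hj⟩ : Fin s) := Fin.ext hk2
      rw [if_pos hk2, if_neg hk, if_pos hk2']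
    · have hk2' : k ≠ (⟨j.val + 1, hj⟩ : Fin s) := by
        simp [Fin.ext_iff]; exact hk2
      rw [if_neg hk2, if_neg hk, if_neg hk2']

lemma psum_mv_ne {s : ℕ} (a : Fin s → ℕ) (j : Fin s) (hj : j.val + 1 < s) (ha1 : 1 ≤ a j)
    {i : Fin s} (hij : i ≠ j) : psum (mv a j) i = psum a i := by
  have h := psum_mv a j hj ha1 i
  have hv : i.val ≠ j.val := fun hh => hij (Fin.ext hh)
  by_cases hle : j ≤ i
  · have hle' : j.val ≤ i.val := hle
    rw [if_pos hle, if_pos (by omega : j.val + 1 ≤ i.val)] at h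
    omega
  · have hle' : ¬ j.val ≤ i.val := fun hh => hle hh
    rw [if_neg hle, if_neg (by omega : ¬ j.val + 1 ≤ i.val)] at h
    omega

lemma psum_mv_self {s : ℕ} (a : Fin s → ℕ) (j : Fin s) (hj : j.val + 1 < s) (ha1 : 1 ≤ a j) :
    psum (mv a j) j + 1 = psum a j := by
  have h := psum_mv a j hj ha1 j
  rw [if_pos le_rfl, if_neg (by omega)] at h
  omega

lemma mv_ne {s : ℕ} (a : Fin s → ℕ) (j : Fin s) (hj : j.val + 1 < s) (ha1 : 1 ≤ a j) :
    mv a j ≠ a := by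
  intro h
  have := psum_mv_self a j hj ha1
  rw [h] at this
  omega

lemma dom_mv {s : ℕ} (a : Fin s → ℕ) (j : Fin s) (hj : j.val + 1 < s) (ha1 : 1 ≤ a j) :
    Dom (mv a j) a := by
  intro i
  by_cases h : i = j
  · subst h
    have := psum_mv_self a i hj ha1
    omega
  · rw [psum_mv_ne a j hj ha1 h]

lemma sum_mv {s : ℕ} (a : Fin s → ℕ) (j : Fin s) (hj : j.val + 1 < s) (ha1 : 1 ≤ a j) :
    ∑ i, mv a j i = ∑ i, a i := by
  have hs : 0 < s := by omega
  have hne : (⟨s - 1, by omega⟩ : Fin s) ≠ j := by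
    simp [Fin.ext_iff]
    omega
  rw [← psum_last (mv a j) hs, ← psum_last a hs]
  exact psum_mv_ne a j hj ha1 hne

lemma mv_covers {s n : ℕ} (a : Fin s → ℕ) (ha : ∑ i, a i = n) (j : Fin s)
    (hj : j.val + 1 < s) (ha1 : 1 ≤ a j) : CoversWC n (mv a j) a := by
  refine ⟨⟨dom_mv a j hj ha1, mv_ne a j hj ha1⟩, ?_⟩
  rintro c hc ⟨hdom1, hne1⟩ ⟨hdom2, hne2⟩
  by_cases hcj : psum c j = psum a j
  · apply hne2
    apply eq_of_psum_eq
    intro i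
    by_cases h : i = j
    · subst h; exact hcj
    · have h1 := hdom1 i
      rw [psum_mv_ne a j hj ha1 h] at h1
      exact le_antisymm (hdom2 i) h1
  · apply hne1
    apply eq_of_psum_eq
    intro i
    by_cases h : i = j
    · subst h
      have h1 := hdom1 i
      have h2 := hdom2 i
      have h3 := psum_mv_self a i hj ha1
      omega
    · have h1 := hdom1 i
      rw [psum_mv_ne a j hj ha1 h] at h1 ⊢
      exact le_antisymm h1 (hdom2 i)

lemma covered_eq_mv {s n : ℕ} (a b : Fin s → ℕ) (ha : ∑ i, a i = n) (hb : ∑ i, b i = n)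
    (hcov : CoversWC n b a) : ∃ j : Fin s, j.val + 1 < s ∧ 1 ≤ a j ∧ b = mv a j := by
  classical
  obtain ⟨⟨hdom, hne⟩, hmin⟩ := hcov
  have hex : ∃ j, psum b j < psum a j := by
    by_contra h
    push_neg at h
    exact hne (eq_of_psum_eq fun j => le_antisymm (hdom j) (h j))
  set T := Finset.univ.filter (fun i : Fin s => psum b i < psum a i) with hT
  have hTne : T.Nonempty := by
    obtain ⟨j, hj⟩ := hex
    exact ⟨j, by simp [hT, hj]⟩
  set j := T.min' hTne with hjdef
  have hjT : psum b j < psum a j := by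
    have := T.min'_mem hTne
    simp [hT] at this
    exact this
  have hlt : ∀ i : Fin s, i < j → psum b i = psum a i := by
    intro i hi
    refine le_antisymm (hdom i) ?_
    by_contra h
    push_neg at h
    have hiT : i ∈ T := by simp [hT]; omega
    exact absurd (T.min'_le i hiT) (not_le.mpr hi)
  have hs : 0 < s := by omega
  have hjlast : j.val + 1 < s := by
    by_contra h
    have hj1 : j = ⟨s - 1, by omega⟩ := fin_mk_eq (by have := j.isLt; omega)
    rw [hj1, psum_last b hs, psum_last a hs, ha, hb] at hjT
    omega
  have ha1 : 1 ≤ a j := by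
    rcases Nat.eq_zero_or_pos j.val with h0 | h0
    · have hj0 : j = ⟨0, hs⟩ := fin_mk_eq h0
      rw [hj0] at hjT ⊢
      rw [psum_zero a hs] at hjT
      omega
    · set m := j.val - 1 with hm
      have hm' : m < s := by omega
      have hA : m + 1 < s := by omega
      have hjm : j = ⟨m + 1, hA⟩ := fin_mk_eq (by omega)
      have hsucc := psum_succ a m hm' hA
      have hmono : psum b ⟨m, hm'⟩ ≤ psum b j := by
        apply psum_mono
        show m ≤ j.val
        omega
      have heq : psum b ⟨m, hm'⟩ = psum a ⟨m, hm'⟩ := by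
        apply hlt
        show m < j.val
        omega
      rw [hjm] at hjT hmono ⊢
      omega
  refine ⟨j, hjlast, ha1, ?_⟩
  by_contra hbne
  refine hmin (mv a j) (by rw [sum_mv a j hjlast ha1, ha]) ⟨?_, hbne⟩
    ⟨dom_mv a j hjlast ha1, mv_ne a j hjlast ha1⟩
  intro i
  by_cases h : i = j
  · rw [h]
    have := psum_mv_self a j hjlast ha1
    omega
  · rw [psum_mv_ne a j hjlast ha1 h]
    exact hdom i

/-- an element of Δ_s(n) is join-irreducible (covers exactly one
element) iff it has the form (0,…,0, n−k, 0,…,0, k) with n−k in position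
t ∈ {0,…,s−2} and k ∈ {0,…,n−1} in the last position. -/
theorem join_irreducible_iff (s n : ℕ) (a : Fin s → ℕ) (ha : ∑ i, a i = n) :
    Set.ncard {b : Fin s → ℕ | (∑ i, b i = n) ∧ CoversWC n b a} = 1 ↔
      ∃ k t : ℕ, k < n ∧ t + 1 < s ∧
        a = fun i : Fin s => if i.val = t then n - k else if i.val = s - 1 then k else 0 := by
  classical
  have hST : {b : Fin s → ℕ | (∑ i, b i = n) ∧ CoversWC n b a}
      = mv a '' {j : Fin s | j.val + 1 < s ∧ 1 ≤ a j} := by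
    ext b
    constructor
    · rintro ⟨hb, hcov⟩
      obtain ⟨j, h1, h2, h3⟩ := covered_eq_mv a b ha hb hcov
      exact ⟨j, ⟨h1, h2⟩, h3.symm⟩
    · rintro ⟨j, ⟨h1, h2⟩, rfl⟩
      exact ⟨by rw [sum_mv a j h1 h2, ha], mv_covers a ha j h1 h2⟩
  have hinj : Set.InjOn (mv a) {j : Fin s | j.val + 1 < s ∧ 1 ≤ a j} := by
    rintro j ⟨hj1, hj2⟩ j' ⟨hj1', hj2'⟩ heq
    by_contra hne
    have e1 := psum_mv_self a j hj1 hj2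
    have e2 : psum (mv a j') j = psum a j := psum_mv_ne a j' hj1' hj2' hne
    rw [heq] at e1
    omega
  rw [hST, Set.ncard_image_of_injOn hinj]
  constructor
  · intro h1
    obtain ⟨j, hj⟩ := Set.ncard_eq_one.mp h1
    have hjmem : j ∈ {j : Fin s | j.val + 1 < s ∧ 1 ≤ a j} := by rw [hj]; rfl
    obtain ⟨hjs, hja⟩ := hjmem
    have hs : 0 < s := by omega
    set last : Fin s := ⟨s - 1, by omega⟩ with hlast
    have hjne : j ≠ last := by simp [hlast, Fin.ext_iff]; omega
    have hzero : ∀ i : Fin s, i ≠ j → i ≠ last → a i = 0 := by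
      intro i hij hil
      have hi1 : i.val + 1 < s := by
        have := i.isLt
        have : i.val ≠ s - 1 := fun hh => hil (Fin.ext (by simp [hlast]; omega))
        omega
      by_contra h0
      have : i ∈ {j : Fin s | j.val + 1 < s ∧ 1 ≤ a j} := ⟨hi1, by omega⟩
      rw [hj] at this
      exact hij this
    have hsum : a j + a last = n := by
      have hsub : ∑ i, a i = ∑ i ∈ {j, last}, a i := by
        refine (Finset.sum_subset (Finset.subset_univ _) ?_).symm
        intro i _ hi
        simp at hi
        exact hzero i hi.1 hi.2
      rw [hsub, Finset.sum_pair hjne] at ha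
      exact ha
    refine ⟨a last, j.val, by omega, hjs, ?_⟩
    funext i
    by_cases hit : i.val = j.val
    · have : i = j := Fin.ext hit
      subst this
      rw [if_pos hit]
      omega
    · rw [if_neg hit]
      by_cases hil : i.val = s - 1
      · have : i = last := by rw [hlast]; exact fin_mk_eq (by omega)
        rw [if_pos hil, this]
      · rw [if_neg hil]
        exact hzero i (fun h => hit (by rw [h])) (fun h => hil (by rw [h]))
  · rintro ⟨k, t, hk, hts, hadef⟩
    have hT : {j : Fin s | j.val + 1 < s ∧ 1 ≤ a j} = {(⟨t, by omega⟩ : Fin s)} := by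
      ext j
      simp only [Set.mem_setOf_eq, Set.mem_singleton_iff, Fin.ext_iff]
      constructor
      · rintro ⟨hj1, hj2⟩
        by_contra hjt
        have : a j = 0 := by
          rw [hadef]
          simp only
          rw [if_neg (by simpa using hjt), if_neg (by omega)]
        omega
      · intro hjt
        refine ⟨by omega, ?_⟩
        rw [hadef]
        simp only
        rw [if_pos hjt]
        omega
    rw [hT]
    exact Set.ncard_singleton _
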